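/- (Dynamic programming principle, deterministic case.) For n ≥ 2 and an admissible couple Q = (Q_min, Q_max) ∈ T⁺(n), P_n(Q; v_0,…,v_{n-1}) = sup{ x v_0 + P_{n-1}(χ(Q,x); v_1,…,v_{n-1}) : x ∈ I_Q }, where χ(Q,x) = ((Q_min - x)⁺, min(Q_max - x, n-1)) and I_Q = [min((Q_min - (n-1))⁺, 1), min(Q_max, 1)]. -/

import Mathlib

/-- Value function of the normalized swing contract with deterministic payoffs. -/
noncomputable def swingVal (n : ℕ) (v : ℕ → ℝ) (a b : ℝ) : ℝ :=
  sSup {r : ℝ | ∃ q : ℕ → ℝ, (∀ k < n, q k ∈ Set.Icc (0:ℝ) 1) ∧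
    (∑ k ∈ Finset.range n, q k) ∈ Set.Icc a b ∧
    r = ∑ k ∈ Finset.range n, q k * v k}

def swingSet (n : ℕ) (v : ℕ → ℝ) (a b : ℝ) : Set ℝ :=
  {r : ℝ | ∃ q : ℕ → ℝ, (∀ k < n, q k ∈ Set.Icc (0:ℝ) 1) ∧
    (∑ k ∈ Finset.range n, q k) ∈ Set.Icc a b ∧
    r = ∑ k ∈ Finset.range n, q k * v k}

lemma swingVal_eq (n : ℕ) (v : ℕ → ℝ) (a b : ℝ) :
    swingVal n v a b = sSup (swingSet n v a b) := rfl

lemma swingSet_bound {n : ℕ} {v : ℕ → ℝ} {a b r : ℝ}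
    (hr : r ∈ swingSet n v a b) : r ≤ ∑ k ∈ Finset.range n, |v k| := by
  obtain ⟨q, hq, -, rfl⟩ := hr
  apply Finset.sum_le_sum
  intro k hk
  have h := hq k (Finset.mem_range.mp hk)
  calc q k * v k ≤ |q k * v k| := le_abs_self _
    _ = |q k| * |v k| := abs_mul _ _
    _ ≤ 1 * |v k| := by
        apply mul_le_mul_of_nonneg_right _ (abs_nonneg _)
        rw [abs_of_nonneg h.1]; exact h.2
    _ = |v k| := one_mul _

lemma swingSet_bddAbove (n : ℕ) (v : ℕ → ℝ) (a b : ℝ) :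
    BddAbove (swingSet n v a b) :=
  ⟨∑ k ∈ Finset.range n, |v k|, fun _ hr => swingSet_bound hr⟩

lemma swingVal_le_bound (n : ℕ) (v : ℕ → ℝ) (a b : ℝ) :
    swingVal n v a b ≤ ∑ k ∈ Finset.range n, |v k| := by
  rw [swingVal_eq]
  exact Real.sSup_le (fun r hr => swingSet_bound hr)
    (Finset.sum_nonneg fun _ _ => abs_nonneg _)

lemma swingSet_nonempty {n : ℕ} (hn : 1 ≤ n) (v : ℕ → ℝ) {a b : ℝ}
    (h0 : 0 ≤ a) (h1 : a ≤ b) (h2 : a ≤ n) :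
    (swingSet n v a b).Nonempty := by
  have hn' : (0:ℝ) < n := by exact_mod_cast hn
  refine ⟨∑ k ∈ Finset.range n, (a / n) * v k, fun _ => a / n, ?_, ?_, rfl⟩
  · intro k _
    constructor
    · positivity
    · rw [div_le_one hn']; exact h2
  · have hsum : ∑ _k ∈ Finset.range n, (a / n : ℝ) = a := by
      rw [Finset.sum_const, Finset.card_range, nsmul_eq_mul,
        mul_div_cancel₀ _ (ne_of_gt hn')]
    rw [hsum]
    exact ⟨le_refl a, h1⟩

lemma le_swingVal {n : ℕ} {v : ℕ → ℝ} {a b r : ℝ}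
    (hr : r ∈ swingSet n v a b) : r ≤ swingVal n v a b :=
  le_csSup (swingSet_bddAbove n v a b) hr
theorem swingVal_dynamic_programming (n : ℕ) (hn : 2 ≤ n) (v : ℕ → ℝ)
    (Qmin Qmax : ℝ) (h0 : 0 ≤ Qmin) (h1 : Qmin ≤ Qmax) (h2 : Qmax ≤ n) :
    swingVal n v Qmin Qmax =
      sSup {r : ℝ | ∃ x ∈ Set.Icc (min (max (Qmin - (n - 1 : ℕ)) 0) 1) (min Qmax 1),
        r = x * v 0 +
          swingVal (n - 1) (fun k => v (k + 1))
            (max (Qmin - x) 0) (min (Qmax - x) ((n : ℝ) - 1))} := by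
  set N := n - 1 with hN
  have hNn : n = N + 1 := by omega
  have hN1 : 1 ≤ N := by omega
  have hNcast : (N : ℝ) = (n : ℝ) - 1 := by rw [hNn]; push_cast; ring
  rw [hNcast]
  have hn1 : (1:ℝ) ≤ (n:ℝ) - 1 := by rw [← hNcast]; exact_mod_cast hN1
  have hQminN : Qmin - ((n:ℝ) - 1) ≤ 1 := by linarith
  have hL : min (max (Qmin - ((n:ℝ)-1)) 0) 1 = max (Qmin - ((n:ℝ)-1)) 0 :=
    min_eq_left (max_le hQminN zero_le_one)
  -- facts about x in the interval
  have hfacts : ∀ x ∈ Set.Icc (min (max (Qmin - ((n:ℝ)-1)) 0) 1) (min Qmax 1),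
      0 ≤ x ∧ x ≤ 1 ∧ x ≤ Qmax ∧ Qmin - ((n:ℝ)-1) ≤ x ∧
      max (Qmin - x) 0 ≤ min (Qmax - x) ((n:ℝ)-1) ∧
      max (Qmin - x) 0 ≤ (N:ℝ) := by
    intro x hx
    have hx0 : 0 ≤ x := le_trans (le_min (le_max_right _ _) zero_le_one) hx.1
    have hx1 : x ≤ 1 := hx.2.trans (min_le_right _ _)
    have hxQ : x ≤ Qmax := hx.2.trans (min_le_left _ _)
    have hxlow : Qmin - ((n:ℝ)-1) ≤ x := le_trans (le_max_left _ _) (hL ▸ hx.1)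
    refine ⟨hx0, hx1, hxQ, hxlow, ?_, ?_⟩
    · exact le_min (max_le (by linarith) (by linarith)) (max_le (by linarith) (by linarith))
    · rw [hNcast]; exact max_le (by linarith) (by linarith)
  have hsplit : ∀ f : ℕ → ℝ,
      ∑ k ∈ Finset.range n, f k = f 0 + ∑ k ∈ Finset.range N, f (k+1) := by
    intro f
    rw [hNn, Finset.sum_range_succ']; ring
  set B : Set ℝ := {r : ℝ | ∃ x ∈ Set.Icc (min (max (Qmin - ((n:ℝ)-1)) 0) 1) (min Qmax 1),
        r = x * v 0 +
          swingVal N (fun k => v (k + 1))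
            (max (Qmin - x) 0) (min (Qmax - x) ((n : ℝ) - 1))} with hB
  have hBbdd : BddAbove B := by
    refine ⟨|v 0| + ∑ k ∈ Finset.range N, |v (k+1)|, fun r hr => ?_⟩
    obtain ⟨x, hx, rfl⟩ := hr
    obtain ⟨hx0, hx1, -⟩ := hfacts x hx
    have h1' : x * v 0 ≤ |v 0| := by
      calc x * v 0 ≤ |x * v 0| := le_abs_self _
        _ = |x| * |v 0| := abs_mul _ _
        _ ≤ 1 * |v 0| := by
            apply mul_le_mul_of_nonneg_right _ (abs_nonneg _)
            rw [abs_of_nonneg hx0]; exact hx1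
        _ = |v 0| := one_mul _
    have h2' := swingVal_le_bound N (fun k => v (k+1))
      (max (Qmin - x) 0) (min (Qmax - x) ((n : ℝ) - 1))
    exact add_le_add h1' h2'
  have hAne : (swingSet n v Qmin Qmax).Nonempty :=
    swingSet_nonempty (by omega) v h0 h1 (h1.trans h2)
  have hAbdd := swingSet_bddAbove n v Qmin Qmax
  rw [swingVal_eq]
  apply le_antisymm
  · -- sSup A ≤ sSup B
    apply csSup_le hAne
    rintro r ⟨q, hq, hsum, rfl⟩
    have hq0 := hq 0 (by omega)
    set S' := ∑ k ∈ Finset.range N, q (k+1) with hS'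
    have hS'0 : 0 ≤ S' :=
      Finset.sum_nonneg fun k hk => (hq (k+1) (by
        have := Finset.mem_range.mp hk; omega)).1
    have hS'N : S' ≤ (N:ℝ) := by
      calc S' ≤ ∑ _k ∈ Finset.range N, (1:ℝ) := by
            apply Finset.sum_le_sum
            intro k hk
            exact (hq (k+1) (by have := Finset.mem_range.mp hk; omega)).2
        _ = (N:ℝ) := by rw [Finset.sum_const, Finset.card_range, nsmul_eq_mul, mul_one]
    have htot : ∑ k ∈ Finset.range n, q k = q 0 + S' := hsplit q
    rw [Set.mem_Icc] at hsum
    have hx : q 0 ∈ Set.Icc (min (max (Qmin - ((n:ℝ)-1)) 0) 1) (min Qmax 1) := by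
      rw [hL]
      constructor
      · apply max_le _ hq0.1
        have : S' ≤ (n:ℝ) - 1 := by rw [← hNcast]; exact hS'N
        linarith [hsum.1]
      · exact le_min (by linarith [hsum.2]) hq0.2
    have hmem : (∑ k ∈ Finset.range N, q (k+1) * v (k+1)) ∈
        swingSet N (fun k => v (k+1)) (max (Qmin - q 0) 0) (min (Qmax - q 0) ((n:ℝ)-1)) := by
      refine ⟨fun k => q (k+1), fun k hk => hq (k+1) (by omega), ?_, rfl⟩
      constructor
      · apply max_le _ hS'0
        linarith [hsum.1]
      · refine le_min (by linarith [hsum.2]) ?_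
        rw [← hNcast]; exact hS'N
    have hval : ∑ k ∈ Finset.range n, q k * v k
        = q 0 * v 0 + ∑ k ∈ Finset.range N, q (k+1) * v (k+1) :=
      hsplit (fun k => q k * v k)
    rw [hval]
    have h1' : q 0 * v 0 + ∑ k ∈ Finset.range N, q (k+1) * v (k+1)
        ≤ q 0 * v 0 + swingVal N (fun k => v (k+1))
            (max (Qmin - q 0) 0) (min (Qmax - q 0) ((n:ℝ)-1)) :=
      add_le_add_right (le_swingVal hmem) _
    refine h1'.trans (le_csSup hBbdd ?_)
    exact ⟨q 0, hx, rfl⟩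
  · -- sSup B ≤ sSup A
    have hBne : B.Nonempty := by
      refine ⟨_, min Qmax 1, ?_, rfl⟩
      constructor
      · rw [hL]
        exact le_min (max_le (by linarith) (by linarith)) (max_le (by linarith) (by linarith))
      · exact le_refl _
    apply csSup_le hBne
    rintro r ⟨x, hx, rfl⟩
    obtain ⟨hx0, hx1, hxQ, hxlow, hab, haN⟩ := hfacts x hx
    have hS'ne : (swingSet N (fun k => v (k+1)) (max (Qmin - x) 0)
        (min (Qmax - x) ((n:ℝ)-1))).Nonempty :=
      swingSet_nonempty hN1 _ (le_max_right _ _) hab haN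
    rw [swingVal_eq]
    have hkey : sSup (swingSet N (fun k => v (k+1)) (max (Qmin - x) 0)
        (min (Qmax - x) ((n:ℝ)-1))) ≤ sSup (swingSet n v Qmin Qmax) - x * v 0 := by
      apply csSup_le hS'ne
      rintro s ⟨q', hq', hsum', rfl⟩
      rw [Set.mem_Icc] at hsum'
      have hQl : Qmin - x ≤ ∑ k ∈ Finset.range N, q' k :=
        le_trans (le_max_left _ _) hsum'.1
      have hQu : ∑ k ∈ Finset.range N, q' k ≤ Qmax - x :=
        hsum'.2.trans (min_le_left _ _)
      have hmem : (x * v 0 + ∑ k ∈ Finset.range N, q' k * v (k+1)) ∈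
          swingSet n v Qmin Qmax := by
        refine ⟨fun k => if k = 0 then x else q' (k-1), ?_, ?_, ?_⟩
        · intro k hk
          match k with
          | 0 => simpa using ⟨hx0, hx1⟩
          | (j+1) =>
            simpa using hq' j (by omega)
        · rw [hsplit]
          simp only [reduceIte, Nat.add_sub_cancel, Nat.succ_ne_zero, if_false]
          exact ⟨by linarith, by linarith⟩
        · rw [hsplit]
          simp only [reduceIte, Nat.add_sub_cancel, Nat.succ_ne_zero, if_false]
      have := le_csSup hAbdd hmem
      linarith
    linarith
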